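/- Let A and B be real symmetric positive semidefinite m×m matrices. Then tr( (B^{1/2} A B^{1/2})^{1/2} ) ≤ (tr A + tr B) / 2, where M^{1/2} denotes the positive semidefinite square root of a positive semidefinite matrix M. Equivalently, the covariance part of the squared Bures metric, 𝒱²(A, B) = tr( A + B − 2 (B^{1/2} A B^{1/2})^{1/2} ), is nonnegative. -/

import Mathlib

open Matrix

section

open scoped ComplexOrder

/-- The positive semidefinite square root of a positive semidefinite matrix, as defined in
Mathlib (December 2024); the definition has since been removed from Mathlib. -/
noncomputable def Matrix.PosSemidef.sqrt {n 𝕜 : Type*} [Fintype n] [RCLike 𝕜] [DecidableEq n]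
    {A : Matrix n n 𝕜} (hA : A.PosSemidef) : Matrix n n 𝕜 :=
  hA.1.eigenvectorUnitary.1 * diagonal ((↑) ∘ (√·) ∘ hA.1.eigenvalues) *
  (star hA.1.eigenvectorUnitary : Matrix n n 𝕜)

end

lemma Matrix.PosSemidef.posSemidef_sqrt {m : ℕ} {A : Matrix (Fin m) (Fin m) ℝ}
    (hA : A.PosSemidef) : hA.sqrt.PosSemidef := by
  have hd : (diagonal ((↑) ∘ (√·) ∘ hA.1.eigenvalues) : Matrix (Fin m) (Fin m) ℝ).PosSemidef := by
    rw [posSemidef_diagonal_iff]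
    intro i
    exact Real.sqrt_nonneg _
  have := hd.mul_mul_conjTranspose_same (hA.1.eigenvectorUnitary : Matrix (Fin m) (Fin m) ℝ)
  exact this

lemma Matrix.PosSemidef.sqrt_mul_self {m : ℕ} {A : Matrix (Fin m) (Fin m) ℝ}
    (hA : A.PosSemidef) : hA.sqrt * hA.sqrt = A := by
  set U : Matrix (Fin m) (Fin m) ℝ := (hA.1.eigenvectorUnitary : Matrix (Fin m) (Fin m) ℝ)
  have hUU : star U * U = 1 := Matrix.mem_unitaryGroup_iff'.mp hA.1.eigenvectorUnitary.2
  have hspec : A = U * diagonal hA.1.eigenvalues * star U := by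
    have := hA.1.spectral_theorem
    simpa using this
  have hsq : (fun i => Real.sqrt (hA.1.eigenvalues i)) * (fun i => Real.sqrt (hA.1.eigenvalues i))
      = hA.1.eigenvalues := by
    funext i
    exact Real.mul_self_sqrt (hA.eigenvalues_nonneg i)
  show U * diagonal _ * star U * (U * diagonal _ * star U) = A
  simp only [Matrix.mul_assoc]
  rw [← Matrix.mul_assoc (star U) U, hUU, Matrix.one_mul,
    ← Matrix.mul_assoc (diagonal _), diagonal_mul_diagonal]
  conv_rhs => rw [hspec]
  rw [Matrix.mul_assoc]
  congr 3

private lemma trace_nonneg_of_posSemidef' {m : ℕ} {M : Matrix (Fin m) (Fin m) ℝ}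
    (hM : M.PosSemidef) : 0 ≤ M.trace := by
  exact hM.trace_nonneg

theorem trace_sqrt_middle_le_avg_trace
    {m : ℕ} (A B : Matrix (Fin m) (Fin m) ℝ)
    (hA : A.PosSemidef) (hB : B.PosSemidef)
    (hMid : (hB.sqrt * A * hB.sqrt).PosSemidef) :
    hMid.sqrt.trace ≤ (A.trace + B.trace) / 2 ∧
    0 ≤ (A + B - 2 • hMid.sqrt).trace := by
  classical
  have hM : (hB.sqrt * A * hB.sqrt).IsHermitian := hMid.1
  set U : Matrix (Fin m) (Fin m) ℝ := (hM.eigenvectorUnitary : Matrix (Fin m) (Fin m) ℝ) with hUdef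
  set μ : Fin m → ℝ := hM.eigenvalues with hμdef
  have hμ0 : ∀ i, 0 ≤ μ i := hMid.eigenvalues_nonneg
  have hUU : star U * U = 1 := Matrix.mem_unitaryGroup_iff'.mp hM.eigenvectorUnitary.2
  have mul_conj : ∀ f g : Fin m → ℝ,
      (U * diagonal f * star U) * (U * diagonal g * star U)
        = U * diagonal (f * g) * star U := by
    intro f g
    simp only [Matrix.mul_assoc]
    rw [← Matrix.mul_assoc (star U) U, hUU, Matrix.one_mul,
      ← Matrix.mul_assoc (diagonal f), diagonal_mul_diagonal]
    rfl
  have hMspec : hB.sqrt * A * hB.sqrt = U * diagonal μ * star U := by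
    have := hM.spectral_theorem
    simpa using this
  set s : Fin m → ℝ := fun i => Real.sqrt (μ i) with hsdef
  set g : Fin m → ℝ := fun i => if μ i = 0 then 0 else (Real.sqrt (μ i))⁻¹ with hgdef
  have hSdef : hMid.sqrt = U * diagonal s * star U := rfl
  set N : Matrix (Fin m) (Fin m) ℝ := U * diagonal g * star U with hNdef
  set C : Matrix (Fin m) (Fin m) ℝ := hA.sqrt * hB.sqrt with hCdef
  set V : Matrix (Fin m) (Fin m) ℝ := C * N with hVdef
  have hAs : star hA.sqrt = hA.sqrt := hA.posSemidef_sqrt.1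
  have hBs : star hB.sqrt = hB.sqrt := hB.posSemidef_sqrt.1
  have hCC : star C * C = U * diagonal μ * star U := by
    rw [hCdef, StarMul.star_mul, hAs, hBs, ← hMspec]
    simp only [Matrix.mul_assoc]
    rw [← Matrix.mul_assoc hA.sqrt hA.sqrt, hA.sqrt_mul_self]
  have hNstar : star N = N := by
    simp [hNdef, StarMul.star_mul, star_star, Matrix.star_eq_conjTranspose,
      diagonal_conjTranspose, Matrix.mul_assoc]
  -- g * μ = s
  have hgs : g * μ = s := by
    funext i
    show g i * μ i = s i
    by_cases h : μ i = 0
    · simp [hgdef, hsdef, h]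
    · have hpos : 0 < μ i := lt_of_le_of_ne (hμ0 i) (Ne.symm h)
      have hs0 : Real.sqrt (μ i) ≠ 0 := ne_of_gt (Real.sqrt_pos.2 hpos)
      have h2 : Real.sqrt (μ i) * Real.sqrt (μ i) = μ i := Real.mul_self_sqrt (hμ0 i)
      simp only [hgdef, hsdef, if_neg h]
      rw [inv_mul_eq_iff_eq_mul₀ hs0]
      exact h2.symm
  have hVC : star V * C = hMid.sqrt := by
    rw [hSdef, hVdef, StarMul.star_mul, Matrix.mul_assoc, hCC, hNstar, hNdef, mul_conj, hgs]
  -- the projection P = V * star V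
  have hVV : V * star V = C * (U * diagonal (g * g) * star U) * star C := by
    rw [hVdef, StarMul.star_mul, hNstar]
    calc C * N * (N * star C) = C * (N * N) * star C := by simp only [Matrix.mul_assoc]
      _ = _ := by rw [hNdef, mul_conj]
  have hgg : g * g * μ * (g * g) = g * g := by
    funext i
    show g i * g i * μ i * (g i * g i) = g i * g i
    by_cases h : μ i = 0
    · simp [hgdef, h]
    · have hpos : 0 < μ i := lt_of_le_of_ne (hμ0 i) (Ne.symm h)
      have h2 : g i * g i * μ i = 1 := by
        simp only [hgdef, if_neg h]
        rw [← mul_inv, Real.mul_self_sqrt (hμ0 i), inv_mul_cancel₀ h]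
      rw [h2, one_mul]
  have hPP : (V * star V) * (V * star V) = V * star V := by
    rw [hVV]
    calc C * (U * diagonal (g * g) * star U) * star C *
          (C * (U * diagonal (g * g) * star U) * star C)
        = C * ((U * diagonal (g * g) * star U) * (star C * C) *
            (U * diagonal (g * g) * star U)) * star C := by
          simp only [Matrix.mul_assoc]
      _ = C * (U * diagonal (g * g) * star U) * star C := by
          rw [hCC, mul_conj, mul_conj, hgg]
  have hPstar : star (V * star V) = V * star V := by rw [StarMul.star_mul, star_star]
  have tr_nn : ∀ X : Matrix (Fin m) (Fin m) ℝ, 0 ≤ (star X * X).trace := fun X =>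
    trace_nonneg_of_posSemidef' (Matrix.star_eq_conjTranspose X ▸
      posSemidef_conjTranspose_mul_self X)
  have h1mP : (1 - V * star V) * (1 - V * star V) = 1 - V * star V := by
    rw [sub_mul, one_mul, mul_sub, mul_one, hPP, sub_self, sub_zero]
  have h1mPstar : star (1 - V * star V) = 1 - V * star V := by
    rw [star_sub, star_one, hPstar]
  -- trace (star V * A * V) ≤ trace A
  have tr_ineq : (star V * A * V).trace ≤ A.trace := by
    have h0 : 0 ≤ (star ((1 - V * star V) * hA.sqrt) * ((1 - V * star V) * hA.sqrt)).trace :=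
      tr_nn _
    have hexp : star ((1 - V * star V) * hA.sqrt) * ((1 - V * star V) * hA.sqrt)
        = hA.sqrt * hA.sqrt - hA.sqrt * (V * star V) * hA.sqrt := by
      rw [StarMul.star_mul, hAs, h1mPstar]
      calc hA.sqrt * (1 - V * star V) * ((1 - V * star V) * hA.sqrt)
          = hA.sqrt * ((1 - V * star V) * (1 - V * star V)) * hA.sqrt := by
            simp only [Matrix.mul_assoc]
        _ = hA.sqrt * (1 - V * star V) * hA.sqrt := by rw [h1mP]
        _ = hA.sqrt * hA.sqrt - hA.sqrt * (V * star V) * hA.sqrt := by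
            rw [mul_sub, mul_one, sub_mul]
    have htr : (hA.sqrt * (V * star V) * hA.sqrt).trace = (star V * A * V).trace := by
      calc (hA.sqrt * (V * star V) * hA.sqrt).trace
          = ((hA.sqrt * V) * (star V * hA.sqrt)).trace := by simp only [Matrix.mul_assoc]
        _ = ((star V * hA.sqrt) * (hA.sqrt * V)).trace := trace_mul_comm _ _
        _ = (star V * (hA.sqrt * hA.sqrt) * V).trace := by simp only [Matrix.mul_assoc]
        _ = (star V * A * V).trace := by rw [hA.sqrt_mul_self]
    rw [hexp, Matrix.trace_sub, hA.sqrt_mul_self, htr] at h0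
    linarith
  -- the main inequality via 0 ≤ tr((X-Y)ᴴ(X-Y)) with X = hA.sqrt * V, Y = hB.sqrt
  have h0 : 0 ≤ (star (hA.sqrt * V - hB.sqrt) * (hA.sqrt * V - hB.sqrt)).trace := tr_nn _
  have hexpand : star (hA.sqrt * V - hB.sqrt) * (hA.sqrt * V - hB.sqrt)
      = star (hA.sqrt * V) * (hA.sqrt * V) - star (hA.sqrt * V) * hB.sqrt
        - (star hB.sqrt * (hA.sqrt * V) - star hB.sqrt * hB.sqrt) := by
    rw [star_sub, sub_mul, mul_sub, mul_sub]
  have tXX : (star (hA.sqrt * V) * (hA.sqrt * V)).trace = (star V * A * V).trace := by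
    have h' : star (hA.sqrt * V) * (hA.sqrt * V) = star V * (hA.sqrt * hA.sqrt) * V := by
      rw [StarMul.star_mul, hAs]
      simp only [Matrix.mul_assoc]
    rw [h', hA.sqrt_mul_self]
  have tXY : (star (hA.sqrt * V) * hB.sqrt).trace = hMid.sqrt.trace := by
    rw [StarMul.star_mul, hAs, Matrix.mul_assoc, ← hCdef, hVC]
  have tYX : (star hB.sqrt * (hA.sqrt * V)).trace = hMid.sqrt.trace := by
    have h' : star hB.sqrt * (hA.sqrt * V) = star (star (hA.sqrt * V) * hB.sqrt) := by
      rw [StarMul.star_mul, star_star]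
    rw [h', Matrix.star_eq_conjTranspose, Matrix.trace_conjTranspose, star_trivial, tXY]
  have tYY : (star hB.sqrt * hB.sqrt).trace = B.trace := by rw [hBs, hB.sqrt_mul_self]
  rw [hexpand, Matrix.trace_sub, Matrix.trace_sub, Matrix.trace_sub, tXX, tXY, tYX, tYY] at h0
  have key : hMid.sqrt.trace ≤ (A.trace + B.trace) / 2 := by linarith
  refine ⟨key, ?_⟩
  have h2 : (A + B - 2 • hMid.sqrt).trace = A.trace + B.trace - 2 * hMid.sqrt.trace := by
    rw [Matrix.trace_sub, Matrix.trace_add, Matrix.trace_smul, nsmul_eq_mul]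
    norm_num
  linarith
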